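/- For any integer vector r = (r₁, ..., r_p) of positive integers, there is a bijection between NC₂(r), the set of non-crossing pairings of {1,...,|r|} pairing no two elements within the same block of 1̂_r, and the set Γ(r) of Dyck r-paths, i.e., functions γ: {0,1,...,p} → ℤ with γ(0) = γ(p) = 0, γ(i) + γ(i−1) ≥ rᵢ and γ(i) − γ(i−1) ∈ {rᵢ, rᵢ−2, ..., −rᵢ} for all 1 ≤ i ≤ p. -/

import Mathlib

namespace NCAux

/-- Height of the ±1 walk determined by word `w` after `n` steps. -/
def hgt (w : ℕ → Bool) : ℕ → ℤ
  | 0 => 0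
  | n+1 => hgt w n + (if w n then 1 else -1)

/-- The lower level of the step at position `x` (edge crossed). -/
def lev (w : ℕ → Bool) (x : ℕ) : ℤ := if w x then hgt w x else hgt w x - 1

lemma hgt_succ (w : ℕ → Bool) (n : ℕ) :
    hgt w (n+1) = hgt w n + (if w n then 1 else -1) := rfl

lemma hgt_succ_up (w : ℕ → Bool) {n : ℕ} (h : w n = true) :
    hgt w (n+1) = hgt w n + 1 := by simp [hgt_succ, h]

lemma hgt_succ_dn (w : ℕ → Bool) {n : ℕ} (h : w n = false) :
    hgt w (n+1) = hgt w n - 1 := by simp [hgt_succ, h]; ring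

lemma lev_up (w : ℕ → Bool) {n : ℕ} (h : w n = true) : lev w n = hgt w n := by
  simp [lev, h]

lemma lev_dn (w : ℕ → Bool) {n : ℕ} (h : w n = false) : lev w n = hgt w (n+1) := by
  simp [lev, h, hgt_succ_dn w h]

/-- number of up-crossings of edge `d` before `n`. -/
def cntU (w : ℕ → Bool) (d : ℤ) (n : ℕ) : ℕ :=
  ((Finset.range n).filter fun z => w z = true ∧ lev w z = d).card

def cntD (w : ℕ → Bool) (d : ℤ) (n : ℕ) : ℕ :=
  ((Finset.range n).filter fun z => w z = false ∧ lev w z = d).card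

lemma cross (w : ℕ → Bool) (d : ℤ) (n : ℕ) :
    (cntU w d n : ℤ) = cntD w d n + (if d < hgt w n then 1 else 0)
      - (if d < 0 then 1 else 0) := by
  induction n with
  | zero => simp [cntU, cntD, show hgt w 0 = 0 from rfl]
  | succ n ih =>
    have hr : Finset.range (n+1) = insert n (Finset.range n) := by
      rw [Finset.range_add_one]
    rcases hw : w n with hv | hv
    · -- w n = false : possible down event
      have hlev : lev w n = hgt w n - 1 := by simp [lev, hw]
      have hU : cntU w d (n+1) = cntU w d n := by
        unfold cntU; rw [hr, Finset.filter_insert]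
        simp [hw]
      have hh : hgt w (n+1) = hgt w n - 1 := hgt_succ_dn w hw
      by_cases hd : hgt w n - 1 = d
      · have hD : cntD w d (n+1) = cntD w d n + 1 := by
          unfold cntD; rw [hr, Finset.filter_insert]
          rw [if_pos ⟨hw, by rw [hlev, hd]⟩, Finset.card_insert_of_notMem (by simp)]
        rw [hU, hD, hh]
        push_cast
        rw [ih]
        split_ifs <;> omega
      · have hD : cntD w d (n+1) = cntD w d n := by
          unfold cntD; rw [hr, Finset.filter_insert]
          rw [if_neg (by rw [hlev]; tauto)]
        rw [hU, hD, hh]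
        push_cast
        rw [ih]
        split_ifs <;> omega
    · -- w n = true : possible up event
      have hlev : lev w n = hgt w n := by simp [lev, hw]
      have hD : cntD w d (n+1) = cntD w d n := by
        unfold cntD; rw [hr, Finset.filter_insert]
        simp [hw]
      have hh : hgt w (n+1) = hgt w n + 1 := hgt_succ_up w hw
      by_cases hd : hgt w n = d
      · have hU : cntU w d (n+1) = cntU w d n + 1 := by
          unfold cntU; rw [hr, Finset.filter_insert]
          rw [if_pos ⟨hw, by rw [hlev, hd]⟩, Finset.card_insert_of_notMem (by simp)]
        rw [hU, hD, hh]
        push_cast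
        rw [ih]
        split_ifs <;> omega
      · have hU : cntU w d (n+1) = cntU w d n := by
          unfold cntU; rw [hr, Finset.filter_insert]
          rw [if_neg (by rw [hlev]; tauto)]
        rw [hU, hD, hh]
        push_cast
        rw [ih]
        split_ifs <;> omega

lemma stayAbove (w : ℕ → Bool) {d : ℤ} {u v : ℕ} (huv : u ≤ v)
    (hu : d < hgt w u) (hev : ∀ z, u ≤ z → z < v → lev w z ≠ d) :
    d < hgt w v := by
  induction v, huv using Nat.le_induction with
  | base => exact hu
  | succ n hn ih =>
    have h1 : d < hgt w n := ih (fun z hz hz' => hev z hz (by omega))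
    rcases hw : w n with hv | hv
    · have := hgt_succ_dn w hw
      have hne := hev n hn (by omega)
      rw [lev_dn w hw] at hne
      omega
    · have := hgt_succ_up w hw
      omega

lemma stayBelow (w : ℕ → Bool) {d : ℤ} {u v : ℕ} (huv : u ≤ v)
    (hu : hgt w u ≤ d) (hev : ∀ z, u ≤ z → z < v → lev w z ≠ d) :
    hgt w v ≤ d := by
  induction v, huv using Nat.le_induction with
  | base => exact hu
  | succ n hn ih =>
    have h1 : hgt w n ≤ d := ih (fun z hz hz' => hev z hz (by omega))
    rcases hw : w n with hv | hv
    · have := hgt_succ_dn w hw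
      omega
    · have := hgt_succ_up w hw
      have hne := hev n hn (by omega)
      rw [lev_up w hw] at hne
      omega


/-- the matching induced by a word: partner of an up-step is the next
crossing of the same edge, partner of a down-step the previous one. -/
noncomputable def mtch (w : ℕ → Bool) (x : ℕ) : ℕ :=
  if w x then sInf {y | x < y ∧ lev w y = lev w x}
  else sSup {y | y < x ∧ lev w y = lev w x}

/-- `a` and `b` form a matched pair. -/
def IsPair (w : ℕ → Bool) (a b : ℕ) : Prop :=
  a < b ∧ w a = true ∧ w b = false ∧ lev w b = lev w a ∧
    ∀ z, a < z → z < b → lev w z ≠ lev w a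

lemma IsPair.mtch_up {w : ℕ → Bool} {a b : ℕ} (h : IsPair w a b) : mtch w a = b := by
  obtain ⟨hab, hwa, hwb, hlev, hno⟩ := h
  rw [mtch, if_pos hwa]
  refine IsLeast.csInf_eq ⟨Set.mem_setOf.mpr ⟨hab, hlev⟩, fun y hy => ?_⟩
  by_contra hyb
  exact hno y hy.1 (by omega) hy.2

lemma IsPair.mtch_dn {w : ℕ → Bool} {a b : ℕ} (h : IsPair w a b) : mtch w b = a := by
  obtain ⟨hab, hwa, hwb, hlev, hno⟩ := h
  rw [mtch, if_neg (by simp [hwb])]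
  refine IsGreatest.csSup_eq ⟨Set.mem_setOf.mpr ⟨hab, by rw [hlev]⟩, fun y hy => ?_⟩
  by_contra hyb
  exact hno y (by omega) hy.1 (by rw [← hlev]; exact hy.2)

section Balanced
variable {w : ℕ → Bool} {N : ℕ}

/-- Existence of the partner of an up-step, assuming the word is balanced at `N`. -/
lemma pair_of_up (hN : hgt w N = 0)
    {x : ℕ} (hx : x < N) (hwx : w x = true) (hlev : 0 ≤ lev w x) :
    IsPair w x (mtch w x) ∧ mtch w x < N := by
  set d := lev w x with hd
  have hdx : hgt w x = d := by rw [hd, lev_up w hwx]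
  have hdx1 : hgt w (x+1) = d + 1 := by rw [hgt_succ_up w hwx, hdx]
  have c1 := cross w d (x+1)
  rw [hdx1, if_pos (show d < d + 1 by omega), if_neg (show ¬ d < (0:ℤ) by omega)] at c1
  have c2 := cross w d N
  rw [hN, if_neg (show ¬ d < (0:ℤ) by omega)] at c2
  have hUmono : cntU w d (x+1) ≤ cntU w d N :=
    Finset.card_le_card (Finset.filter_subset_filter _ (Finset.range_subset_range.mpr (by omega)))
  have hDlt : cntD w d (x+1) < cntD w d N := by
    unfold cntU cntD at *; omega
  have hns : ¬ ((Finset.range N).filter fun z => w z = false ∧ lev w z = d) ⊆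
      ((Finset.range (x+1)).filter fun z => w z = false ∧ lev w z = d) := by
    intro h
    exact absurd (Finset.card_le_card h) (by unfold cntD at hDlt; omega)
  obtain ⟨z, hzt, hzs⟩ := Finset.not_subset.mp hns
  simp only [Finset.mem_filter, Finset.mem_range] at hzt hzs
  have hzx : x < z := by
    by_contra hc
    exact hzs ⟨by omega, hzt.2⟩
  have hSne : z ∈ {y | x < y ∧ lev w y = d} := ⟨hzx, hzt.2.2⟩
  set b := sInf {y | x < y ∧ lev w y = d} with hb
  have hbS : b ∈ {y | x < y ∧ lev w y = d} := Nat.sInf_mem ⟨z, hSne⟩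
  have hbz : b ≤ z := Nat.sInf_le hSne
  have hbx : x < b := hbS.1
  have hbN : b < N := by omega
  have hno : ∀ y, x < y → y < b → lev w y ≠ d := by
    intro y hy1 hy2 hy3
    have hyS : y ∈ {y | x < y ∧ lev w y = d} := Set.mem_setOf.mpr ⟨hy1, hy3⟩
    exact absurd (Nat.sInf_le hyS) (by omega)
  have hwb : w b = false := by
    rcases hww : w b with h | h
    · rfl
    · exfalso
      have h1 : d < hgt w b := stayAbove w (show x + 1 ≤ b by omega) (by omega)
        (fun z hz1 hz2 => hno z (by omega) hz2)
      rw [← lev_up w hww, hbS.2] at h1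
      omega
  have hpair : IsPair w x b := ⟨hbS.1, hwx, hwb, hbS.2, hno⟩
  rw [hpair.mtch_up]
  exact ⟨hpair, hbN⟩

/-- Existence of the partner of a down-step. -/
lemma pair_of_dn {x : ℕ} (hwx : w x = false) (hlev : 0 ≤ lev w x) :
    IsPair w (mtch w x) x := by
  set d := lev w x with hd
  have hdx1 : hgt w (x+1) = d := by rw [hd, ← lev_dn w hwx]
  have hdx : hgt w x = d + 1 := by
    have := hgt_succ_dn w hwx; omega
  have c1 := cross w d x
  rw [hdx, if_pos (show d < d + 1 by omega), if_neg (show ¬ d < (0:ℤ) by omega)] at c1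
  have hne : ∃ z, z ∈ ((Finset.range x).filter fun z => w z = true ∧ lev w z = d) := by
    apply Finset.Nonempty.exists_mem
    rw [← Finset.card_pos]
    unfold cntU cntD at c1
    omega
  obtain ⟨z, hz⟩ := hne
  simp only [Finset.mem_filter, Finset.mem_range] at hz
  have hSne : z ∈ {y | y < x ∧ lev w y = d} := ⟨hz.1, hz.2.2⟩
  have hbdd : BddAbove {y | y < x ∧ lev w y = d} := ⟨x, fun y hy => le_of_lt hy.1⟩
  set a := sSup {y | y < x ∧ lev w y = d} with ha
  have haS : a ∈ {y | y < x ∧ lev w y = d} := Nat.sSup_mem ⟨z, hSne⟩ hbdd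
  have hax : a < x := haS.1
  have hno : ∀ y, a < y → y < x → lev w y ≠ d := by
    intro y hy1 hy2 hy3
    exact absurd (le_csSup hbdd (Set.mem_setOf.mpr ⟨hy2, hy3⟩)) (by omega)
  have hwa : w a = true := by
    rcases hww : w a with h | h
    · exfalso
      have h1 : hgt w x ≤ d := stayBelow w (show a + 1 ≤ x by omega)
        (by rw [← lev_dn w hww, haS.2]) (fun z hz1 hz2 => hno z (by omega) hz2)
      omega
    · rfl
  have hpair : IsPair w a x :=
    ⟨haS.1, hwa, hwx, by rw [haS.2], fun z h1 h2 => by rw [haS.2]; exact hno z h1 h2⟩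
  rw [hpair.mtch_dn]
  exact hpair

variable (hN : hgt w N = 0) (hnn : ∀ y, y ≤ N → 0 ≤ hgt w y)
include hN hnn

lemma lev_nonneg {x : ℕ} (hx : x < N) : 0 ≤ lev w x := by
  rcases hww : w x with h | h
  · rw [lev_dn w hww]; exact hnn _ (by omega)
  · rw [lev_up w hww]; exact hnn _ (by omega)

lemma mtch_lt {x : ℕ} (hx : x < N) : mtch w x < N := by
  rcases hww : w x with h | h
  · have := (pair_of_dn hww (lev_nonneg hN hnn hx)).1
    omega
  · exact (pair_of_up hN hx hww (lev_nonneg hN hnn hx)).2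

lemma mtch_pair {x : ℕ} (hx : x < N) :
    (w x = true ∧ IsPair w x (mtch w x)) ∨ (w x = false ∧ IsPair w (mtch w x) x) := by
  rcases hww : w x with h | h
  · exact Or.inr ⟨rfl, pair_of_dn hww (lev_nonneg hN hnn hx)⟩
  · exact Or.inl ⟨rfl, (pair_of_up hN hx hww (lev_nonneg hN hnn hx)).1⟩

lemma mtch_invol {x : ℕ} (hx : x < N) : mtch w (mtch w x) = x := by
  rcases mtch_pair hN hnn hx with ⟨_, hp⟩ | ⟨_, hp⟩
  · exact hp.mtch_dn
  · exact hp.mtch_up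

lemma mtch_gt_iff {x : ℕ} (hx : x < N) : x < mtch w x ↔ w x = true := by
  rcases mtch_pair hN hnn hx with ⟨hw, hp⟩ | ⟨hw, hp⟩
  · exact ⟨fun _ => hw, fun _ => hp.1⟩
  · constructor
    · intro h; exfalso; have := hp.1; omega
    · intro h; rw [hw] at h; cases h
  
lemma mtch_ne {x : ℕ} (hx : x < N) : mtch w x ≠ x := by
  rcases mtch_pair hN hnn hx with ⟨_, hp⟩ | ⟨_, hp⟩
  · have := hp.1; omega
  · have := hp.1; omega

lemma mtch_noncross {a b : ℕ} (ha : a < N) (hb : b < N)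
    (h1 : a < b) (h2 : b < mtch w a) (h3 : mtch w a < mtch w b) : False := by
  have hwa : w a = true := (mtch_gt_iff hN hnn ha).mp (by omega)
  have hwb : w b = true := (mtch_gt_iff hN hnn hb).mp (by omega)
  obtain ⟨-, hpa⟩ | ⟨hc, -⟩ := mtch_pair hN hnn ha
  swap; · rw [hwa] at hc; cases hc
  obtain ⟨-, hpb⟩ | ⟨hc, -⟩ := mtch_pair hN hnn hb
  swap; · rw [hwb] at hc; cases hc
  set A := mtch w a
  set B := mtch w b
  set d := lev w a with hd
  -- heights stay above d on (a, A]
  have hup : ∀ z, a + 1 ≤ z → z ≤ A → d < hgt w z := by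
    intro z hz1 hz2
    refine stayAbove w hz1 ?_ (fun y hy1 hy2 => hpa.2.2.2.2 y (by omega) (by omega))
    rw [hgt_succ_up w hwa, ← lev_up w hwa]
    omega
  have hlevb : d < lev w b := by
    rw [lev_up w hwb]
    exact hup b (by omega) (by omega)
  -- heights stay above lev b on (b, B]
  have hup2 : d < hgt w (A + 1) := by
    have h4 : lev w b < hgt w (A+1) := by
      refine stayAbove w (show b + 1 ≤ A + 1 by omega) ?_
        (fun y hy1 hy2 => hpb.2.2.2.2 y (by omega) (by omega))
      rw [hgt_succ_up w hwb, ← lev_up w hwb]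
      omega
    omega
  have hA : hgt w (A + 1) = d := by
    have h5 : lev w A = d := hpa.2.2.2.1
    rw [lev_dn w hpa.2.2.1] at h5
    exact h5
  omega

end Balanced

lemma filter_range_split (P : ℕ → Prop) [DecidablePred P] {a b : ℕ} (h : a ≤ b) :
    ((Finset.range b).filter P).card
      = ((Finset.range a).filter P).card + ((Finset.Ico a b).filter P).card := by
  rw [Finset.range_eq_Ico]
  rw [show Finset.Ico 0 b = Finset.Ico 0 a ∪ Finset.Ico a b from
    (Finset.Ico_union_Ico_eq_Ico (Nat.zero_le a) h).symm]
  rw [Finset.filter_union, Finset.card_union_of_disjoint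
    (Finset.disjoint_filter_filter (Finset.Ico_disjoint_Ico_consecutive 0 a b))]
  rw [← Finset.range_eq_Ico]

section Pairing
variable {N : ℕ} {m' : ℕ → ℕ}

/-- the word associated to a pairing. -/
def wd (m' : ℕ → ℕ) (N : ℕ) (x : ℕ) : Bool := decide (x < N ∧ x < m' x)

lemma wd_eq_false_of_ge {x : ℕ} (h : N ≤ x) : wd m' N x = false := by
  simp [wd]; omega

variable (hmlt : ∀ x, x < N → m' x < N) (hinv : ∀ x, x < N → m' (m' x) = x)
  (hne : ∀ x, x < N → m' x ≠ x)

lemma wd_true_iff {x : ℕ} (h : x < N) : wd m' N x = true ↔ x < m' x := by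
  simp [wd, h]

include hne in
lemma wd_false_iff {x : ℕ} (h : x < N) : wd m' N x = false ↔ m' x < x := by
  have := hne x h
  simp [wd, h]
  omega

include hne in
lemma hgt_wd {n : ℕ} (hn : n ≤ N) :
    hgt (wd m' N) n = (((Finset.range n).filter fun z => z < m' z).card : ℤ)
      - ((Finset.range n).filter fun z => m' z < z).card := by
  induction n with
  | zero => simp [hgt]
  | succ n ih =>
    have hn' : n ≤ N := by omega
    have hnN : n < N := by omega
    rw [hgt_succ, ih hn']
    have hr : Finset.range (n+1) = insert n (Finset.range n) := by
      rw [Finset.range_add_one]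
    have hcu : ∀ (P : ℕ → Prop) (_ : DecidablePred P), P n →
        ((Finset.range (n+1)).filter P).card = ((Finset.range n).filter P).card + 1 := by
      intro P _ hP
      rw [hr, Finset.filter_insert, if_pos hP, Finset.card_insert_of_notMem (by simp)]
    have hcn : ∀ (P : ℕ → Prop) (_ : DecidablePred P), ¬ P n →
        ((Finset.range (n+1)).filter P).card = ((Finset.range n).filter P).card := by
      intro P _ hP
      rw [hr, Finset.filter_insert, if_neg hP]
    rcases Nat.lt_or_ge n (m' n) with hc | hc
    · rw [hcu (fun z => z < m' z) inferInstance hc,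
        hcn (fun z => m' z < z) inferInstance (by omega)]
      rw [if_pos (by exact (wd_true_iff hnN).mpr hc)]
      push_cast; ring
    · have hc' : m' n < n := by have := hne n hnN; omega
      rw [hcn (fun z => z < m' z) inferInstance (by omega),
        hcu (fun z => m' z < z) inferInstance hc']
      rw [if_neg (by simp [wd]; omega)]
      push_cast; ring

include hmlt hinv hne in
lemma hgt_wd_span {n : ℕ} (hn : n ≤ N) :
    hgt (wd m' N) n
      = (((Finset.range n).filter fun z => z < m' z ∧ n ≤ m' z).card : ℤ) := by
  rw [hgt_wd hne hn]
  have hb : ((Finset.range n).filter fun z => m' z < z).card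
      = ((Finset.range n).filter fun z => z < m' z ∧ m' z < n).card := by
    apply Finset.card_bij (fun z _ => m' z)
    · intro z hz
      simp only [Finset.mem_filter, Finset.mem_range] at hz ⊢
      have hzN : z < N := by omega
      have h2 := hinv z hzN
      refine ⟨by omega, by omega, by omega⟩
    · intro z hz y hy hzy
      simp only [Finset.mem_filter, Finset.mem_range] at hz hy
      have h1 := hinv z (by omega)
      have h2 := hinv y (by omega)
      rw [hzy] at h1
      omega
    · intro y hy
      simp only [Finset.mem_filter, Finset.mem_range] at hy
      have hyN : y < N := by omega
      have hmy : m' y < N := hmlt y hyN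
      refine ⟨m' y, ?_, hinv y hyN⟩
      simp only [Finset.mem_filter, Finset.mem_range]
      have := hinv y hyN
      omega
  rw [hb]
  have key := Finset.card_filter_add_card_filter_not
    (s := (Finset.range n).filter fun z => z < m' z) (p := fun z => m' z < n)
  rw [Finset.filter_filter, Finset.filter_filter] at key
  have hcongr : ((Finset.range n).filter fun z => z < m' z ∧ ¬ m' z < n)
      = ((Finset.range n).filter fun z => z < m' z ∧ n ≤ m' z) := by
    apply Finset.filter_congr
    intro z hz
    simp [not_lt]
  rw [hcongr] at key
  omega

include hmlt hinv hne in
lemma hgt_wd_diff {a b : ℕ} (hab : a ≤ b) (hb : b ≤ N) :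
    hgt (wd m' N) b - hgt (wd m' N) a
      = (((Finset.Ico a b).filter fun z => z < m' z).card : ℤ)
        - ((Finset.Ico a b).filter fun z => m' z < z).card := by
  rw [hgt_wd hne hb, hgt_wd hne (by omega)]
  rw [filter_range_split (fun z => z < m' z) hab,
    filter_range_split (fun z => m' z < z) hab]
  push_cast
  ring

variable (hnc : ∀ a b, a < N → b < N → a < b → b < m' a → m' a < m' b → False)

include hmlt hinv hne hnc in
lemma interval_closed {a c : ℕ} (ha : a < N) (hup : a < m' a)
    (hc1 : a < c) (hc2 : c < m' a) : a < m' c ∧ m' c < m' a := by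
  have hcN : c < N := by have := hmlt a ha; omega
  have hmc : m' (m' c) = c := hinv c hcN
  have hma : m' (m' a) = a := hinv a ha
  have h1 : m' c ≠ a := fun h => by rw [h] at hmc; omega
  have h2 : m' c ≠ m' a := fun h => by rw [h, hma] at hmc; omega
  constructor
  · by_contra hlt
    have hmcN : m' c < N := hmlt c hcN
    exact hnc (m' c) a hmcN ha (by omega) (by omega) (by omega)
  · by_contra hlt
    exact hnc a c ha hcN hc1 hc2 (by omega)

include hmlt hinv hne hnc in
lemma pair_of_pairing {a : ℕ} (ha : a < N) (hup : a < m' a) :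
    IsPair (wd m' N) a (m' a) := by
  set w := wd m' N with hw
  set b := m' a with hbdef
  have hbN : b < N := hmlt a ha
  have hwa : w a = true := (wd_true_iff ha).mpr hup
  have hwb : w b = false := by
    rw [hw, wd_false_iff hne hbN, hbdef, hinv a ha]
    omega
  -- down steps inside (a, b) inject into up steps
  have hdnup : ∀ z, a + 1 ≤ z → z ≤ b →
      ((Finset.Ico (a+1) z).filter fun c => m' c < c).card
        ≤ ((Finset.Ico (a+1) z).filter fun c => c < m' c).card := by
    intro z hz1 hz2
    apply Finset.card_le_card_of_injOn (fun c => m' c)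
    · intro c hc
      simp only [Finset.mem_coe, Finset.mem_filter, Finset.mem_Ico] at hc ⊢
      obtain ⟨⟨hc1, hc2⟩, hc3⟩ := hc
      have := interval_closed hmlt hinv hne hnc (c := c) ha hup (by omega) (by omega)
      have := hinv c (by omega)
      refine ⟨⟨by omega, by omega⟩, by omega⟩
    · intro x hx y hy hxy
      simp only [Finset.coe_filter, Set.mem_setOf_eq, Finset.mem_Ico] at hx hy
      have h1 := hinv x (by omega)
      have h2 := hinv y (by omega)
      simp only at hxy
      rw [hxy] at h1
      omega
  have hstay : ∀ z, a + 1 ≤ z → z ≤ b → hgt w a + 1 ≤ hgt w z := by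
    intro z hz1 hz2
    have hd := hgt_wd_diff hmlt hinv hne (show a + 1 ≤ z by omega) (by omega)
    rw [← hw] at hd
    have hd2 := hgt_succ_up w hwa
    have := hdnup z hz1 hz2
    omega
  have hgtb : hgt w b = hgt w a + 1 := by
    have hupdn : ((Finset.Ico (a+1) b).filter fun c => c < m' c).card
        ≤ ((Finset.Ico (a+1) b).filter fun c => m' c < c).card := by
      apply Finset.card_le_card_of_injOn (fun c => m' c)
      · intro c hc
        simp only [Finset.mem_coe, Finset.mem_filter, Finset.mem_Ico] at hc ⊢
        obtain ⟨⟨hc1, hc2⟩, hc3⟩ := hc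
        have := interval_closed hmlt hinv hne hnc (c := c) ha hup (by omega) (by omega)
        have := hinv c (by omega)
        refine ⟨⟨by omega, by omega⟩, by omega⟩
      · intro x hx y hy hxy
        simp only [Finset.coe_filter, Set.mem_setOf_eq, Finset.mem_Ico] at hx hy
        have h1 := hinv x (by omega)
        have h2 := hinv y (by omega)
        simp only at hxy
        rw [hxy] at h1
        omega
    have hd := hgt_wd_diff hmlt hinv hne (show a + 1 ≤ b by omega) (by omega)
    rw [← hw] at hd
    have hd2 := hgt_succ_up w hwa
    have := hdnup b (by omega) le_rfl
    omega
  have hlevb : lev w b = lev w a := by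
    rw [lev_dn w hwb, lev_up w hwa, hgt_succ_dn w hwb]
    omega
  refine ⟨hup, hwa, hwb, hlevb, ?_⟩
  intro z hz1 hz2 hzz
  rw [lev_up w hwa] at hzz
  have h1 := hstay z (by omega) (by omega)
  have h2 := hstay (z+1) (by omega) (by omega)
  rcases hwz : w z with h | h
  · rw [lev_dn w hwz] at hzz
    omega
  · rw [lev_up w hwz] at hzz
    omega

include hmlt hinv hne hnc in
lemma mtch_wd_eq {x : ℕ} (hx : x < N) : mtch (wd m' N) x = m' x := by
  rcases Nat.lt_or_ge x (m' x) with hc | hc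
  · exact (pair_of_pairing hmlt hinv hne hnc hx hc).mtch_up
  · have hc' : m' x < x := by have := hne x hx; omega
    have hmxN : m' x < N := hmlt x hx
    have hpair := pair_of_pairing hmlt hinv hne hnc hmxN
      (by rw [hinv x hx]; omega)
    rw [hinv x hx] at hpair
    exact hpair.mtch_dn

end Pairing

section Blocks
variable {p N : ℕ} {B : ℕ → ℕ} {rr : ℕ → ℕ} {fb : ℕ → ℕ}
variable (hB0 : B 0 = 0) (hBp : B p = N)
  (hstep : ∀ k, k < p → B (k+1) = B k + rr k)
  (hfb : ∀ x, x < N → fb x < p ∧ B (fb x) ≤ x ∧ x < B (fb x + 1))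

include hstep in
lemma B_mono : ∀ a b, a ≤ b → b ≤ p → B a ≤ B b := by
  intro a b hab hbp
  induction b, hab using Nat.le_induction with
  | base => exact le_rfl
  | succ n hn ih =>
    have := hstep n (by omega)
    have := ih (by omega)
    omega

include hB0 hBp hstep hfb in
lemma fb_eq {x k : ℕ} (hk : k < p) (h1 : B k ≤ x) (h2 : x < B (k+1)) :
    fb x = k := by
  have hxN : x < N := by
    have := B_mono hstep (k+1) p (by omega) le_rfl
    omega
  obtain ⟨hf1, hf2, hf3⟩ := hfb x hxN
  by_contra hne
  rcases Nat.lt_or_ge (fb x) k with hc | hc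
  · have := B_mono hstep (fb x + 1) k (by omega) (by omega)
    omega
  · have := B_mono hstep (k + 1) (fb x) (by omega) (by omega)
    omega

end Blocks

section GammaWord
variable {p N : ℕ} {B : ℕ → ℕ} {rr : ℕ → ℕ} {fb : ℕ → ℕ} {g : ℕ → ℤ} {s : ℕ → ℕ}
variable (hB0 : B 0 = 0) (hBp : B p = N)
  (hstep : ∀ k, k < p → B (k+1) = B k + rr k)
  (hfb : ∀ x, x < N → fb x < p ∧ B (fb x) ≤ x ∧ x < B (fb x + 1))
  (hsr : ∀ k, k < p → s k ≤ rr k)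
  (hg0 : g 0 = 0) (hgp : g p = 0)
  (hgd : ∀ k, k < p → g (k+1) - g k = (rr k : ℤ) - 2 * s k)
  (hsg : ∀ k, k < p → (s k : ℤ) ≤ g k)
  (htg : ∀ k, k < p → ((rr k : ℤ) - s k) ≤ g (k+1))

/-- the word built from an admissible lattice path. -/
def wg (B : ℕ → ℕ) (fb : ℕ → ℕ) (s : ℕ → ℕ) (N : ℕ) (x : ℕ) : Bool :=
  decide (x < N ∧ B (fb x) + s (fb x) ≤ x)

lemma wg_false_of_ge {x : ℕ} (h : N ≤ x) : wg B fb s N x = false := by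
  simp [wg]; omega

include hB0 hBp hstep hfb hsr hgd in
lemma hgt_wg_block {k : ℕ} (hk : k < p) (hbase : hgt (wg B fb s N) (B k) = g k) :
    ∀ u, u ≤ rr k → hgt (wg B fb s N) (B k + u)
      = g k + (if u ≤ s k then -(u:ℤ) else (u:ℤ) - 2 * s k) := by
  intro u hu
  induction u with
  | zero => simpa using hbase
  | succ u ih =>
    have hu' : u ≤ rr k := by omega
    have hxN : B k + u < N := by
      have h1 := hstep k hk
      have h2 := B_mono hstep (k+1) p (by omega) le_rfl
      omega
    have hfbx : fb (B k + u) = k :=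
      fb_eq hB0 hBp hstep hfb hk (by omega) (by rw [hstep k hk]; omega)
    rw [← Nat.add_assoc, hgt_succ, ih hu']
    rcases Nat.lt_or_ge u (s k) with hc | hc
    · have hwx : wg B fb s N (B k + u) = false := by
        simp only [wg, decide_eq_false_iff_not, hfbx, not_and]
        intro _
        omega
      rw [hwx, if_pos (show u ≤ s k by omega), if_pos (show u + 1 ≤ s k by omega),
        if_neg (show ¬ ((false : Bool) = true) from by simp)]
      push_cast
      ring
    · have hwx : wg B fb s N (B k + u) = true := by
        simp only [wg, decide_eq_true_eq, hfbx]
        exact ⟨hxN, by omega⟩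
      have hss := hsr k hk
      rw [hwx, if_pos (show (true : Bool) = true from rfl)]
      by_cases hc2 : u ≤ s k
      · have hueq : u = s k := by omega
        rw [if_pos hc2, if_neg (show ¬ (u + 1 ≤ s k) by omega)]
        push_cast
        omega
      · rw [if_neg hc2, if_neg (show ¬ (u + 1 ≤ s k) by omega)]
        push_cast
        ring

include hB0 hBp hstep hfb hsr hgd hg0 in
lemma hgt_wg_B : ∀ k, k ≤ p → hgt (wg B fb s N) (B k) = g k := by
  intro k hk
  induction k with
  | zero => rw [hB0]; simpa [hgt] using hg0.symm
  | succ k ih =>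
    have hk' : k < p := by omega
    have hb := hgt_wg_block hB0 hBp hstep hfb hsr hgd hk' (ih (by omega)) (rr k) le_rfl
    rw [hstep k hk'] at *
    rw [hb]
    have := hgd k hk'
    have := hsr k hk'
    rcases Nat.lt_or_ge (rr k) (s k) with hc | hc
    · omega
    · by_cases hc2 : rr k ≤ s k
      · rw [if_pos hc2]
        push_cast at *
        omega
      · rw [if_neg hc2]
        push_cast at *
        omega

include hB0 hBp hstep hfb hsr hgd hg0 hgp in
lemma hgt_wg_N : hgt (wg B fb s N) N = 0 := by
  have := hgt_wg_B hB0 hBp hstep hfb hsr hg0 hgd p le_rfl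
  rw [hBp] at this
  rw [this, hgp]

include hB0 hBp hstep hfb hsr hgd hg0 hgp hsg in
lemma hgt_wg_nonneg : ∀ y, y ≤ N → 0 ≤ hgt (wg B fb s N) y := by
  intro y hy
  rcases Nat.lt_or_ge y N with hc | hc
  · obtain ⟨hf1, hf2, hf3⟩ := hfb y hc
    set k := fb y
    have hy2 : y = B k + (y - B k) := by omega
    have hu : y - B k ≤ rr k := by
      have := hstep k hf1
      omega
    rw [hy2, hgt_wg_block hB0 hBp hstep hfb hsr hgd hf1
      (hgt_wg_B hB0 hBp hstep hfb hsr hg0 hgd k (by omega)) _ hu]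
    have := hsg k hf1
    have := hsr k hf1
    split_ifs with h
    · push_cast; omega
    · push_cast; omega
  · have hyN : y = N := by omega
    rw [hyN, hgt_wg_N hB0 hBp hstep hfb hsr hg0 hgp hgd]

include hB0 hBp hstep hfb hsr hgd hg0 hgp hsg in
lemma mtch_wg_block_ne {x : ℕ} (hx : x < N) :
    fb (mtch (wg B fb s N) x) ≠ fb x := by
  have hN0 : hgt (wg B fb s N) N = 0 := hgt_wg_N hB0 hBp hstep hfb hsr hg0 hgp hgd
  have hnn : ∀ y, y ≤ N → 0 ≤ hgt (wg B fb s N) y :=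
    hgt_wg_nonneg hB0 hBp hstep hfb hsr hg0 hgp hgd hsg
  have hbN : mtch (wg B fb s N) x < N := mtch_lt hN0 hnn hx
  rcases mtch_pair hN0 hnn hx with ⟨hwx, hp⟩ | ⟨hwx, hp⟩
  · -- x is an up step, partner is a down step after it
    have hxb : x < mtch (wg B fb s N) x := hp.1
    have hwb := hp.2.2.1
    simp only [wg, decide_eq_true_eq] at hwx
    simp only [wg, decide_eq_false_iff_not, not_and, not_le] at hwb
    intro heq
    rw [heq] at hwb
    have := hwb hbN
    omega
  · -- x is a down step, partner is an up step before it
    have hxb : mtch (wg B fb s N) x < x := hp.1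
    have hwa := hp.2.1
    simp only [wg, decide_eq_true_eq] at hwa
    simp only [wg, decide_eq_false_iff_not, not_and, not_le] at hwx
    intro heq
    rw [heq] at hwa
    have := hwx hx
    omega

end GammaWord

section PairingBlocks
variable {p N : ℕ} {B : ℕ → ℕ} {rr : ℕ → ℕ} {fb : ℕ → ℕ} {m' : ℕ → ℕ}
variable (hB0 : B 0 = 0) (hBp : B p = N)
  (hstep : ∀ k, k < p → B (k+1) = B k + rr k)
  (hfb : ∀ x, x < N → fb x < p ∧ B (fb x) ≤ x ∧ x < B (fb x + 1))
  (hmlt : ∀ x, x < N → m' x < N) (hinv : ∀ x, x < N → m' (m' x) = x)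
  (hne : ∀ x, x < N → m' x ≠ x)
  (hnc : ∀ a b, a < N → b < N → a < b → b < m' a → m' a < m' b → False)
  (hblk : ∀ x, x < N → fb (m' x) ≠ fb x)

include hmlt hinv hne in
lemma hgt_wd_N : hgt (wd m' N) N = 0 := by
  rw [hgt_wd_span hmlt hinv hne le_rfl]
  have : ((Finset.range N).filter fun z => z < m' z ∧ N ≤ m' z) = ∅ := by
    apply Finset.filter_false_of_mem
    intro z hz
    simp only [Finset.mem_range] at hz
    have := hmlt z hz
    omega
  rw [this]
  simp

include hBp hstep in
lemma block_lt_N {k x : ℕ} (hk : k < p) (h1 : B k ≤ x) (h2 : x < B k + rr k) :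
    x < N := by
  have h3 := hstep k hk
  have := B_mono hstep (k+1) p (by omega) le_rfl
  omega

include hB0 hBp hstep hfb hmlt hblk in
lemma closer_out {k x : ℕ} (hk : k < p) (h1 : B k ≤ x) (h2 : x < B k + rr k)
    (h3 : m' x < x) : m' x < B k := by
  have hxN : x < N := block_lt_N hBp hstep hk h1 h2
  have hfx : fb x = k := fb_eq hB0 hBp hstep hfb hk h1 (by rw [hstep k hk]; omega)
  by_contra hc
  have : fb (m' x) = k := fb_eq hB0 hBp hstep hfb hk (by omega)
    (by rw [hstep k hk]; omega)
  exact hblk x hxN (by rw [this, hfx])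

include hB0 hBp hstep hfb hmlt hblk in
lemma opener_out {k x : ℕ} (hk : k < p) (h1 : B k ≤ x) (h2 : x < B k + rr k)
    (h3 : x < m' x) : B k + rr k ≤ m' x := by
  have hxN : x < N := block_lt_N hBp hstep hk h1 h2
  have hfx : fb x = k := fb_eq hB0 hBp hstep hfb hk h1 (by rw [hstep k hk]; omega)
  by_contra hc
  have : fb (m' x) = k := fb_eq hB0 hBp hstep hfb hk (by omega)
    (by rw [hstep k hk]; omega)
  exact hblk x hxN (by rw [this, hfx])

/-- number of closers in block `k`. -/
def sB (B : ℕ → ℕ) (rr : ℕ → ℕ) (m' : ℕ → ℕ) (k : ℕ) : ℕ :=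
  ((Finset.Ico (B k) (B k + rr k)).filter fun x => m' x < x).card

/-- number of openers in block `k`. -/
def tB (B : ℕ → ℕ) (rr : ℕ → ℕ) (m' : ℕ → ℕ) (k : ℕ) : ℕ :=
  ((Finset.Ico (B k) (B k + rr k)).filter fun x => x < m' x).card

include hBp hstep hne in
lemma sB_add_tB {k : ℕ} (hk : k < p) : sB B rr m' k + tB B rr m' k = rr k := by
  have key := Finset.card_filter_add_card_filter_not
    (s := Finset.Ico (B k) (B k + rr k)) (p := fun x => m' x < x)
  have hcongr : ((Finset.Ico (B k) (B k + rr k)).filter fun x => ¬ m' x < x)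
      = ((Finset.Ico (B k) (B k + rr k)).filter fun x => x < m' x) := by
    apply Finset.filter_congr
    intro x hx
    simp only [Finset.mem_Ico] at hx
    have := hne x (block_lt_N hBp hstep hk hx.1 hx.2)
    simp only [not_lt, eq_iff_iff]
    omega
  rw [hcongr] at key
  rw [sB, tB]
  have := Nat.card_Ico (B k) (B k + rr k)
  omega

include hBp hstep hmlt hinv hne in
lemma hgt_wd_diff_block {k : ℕ} (hk : k < p) :
    hgt (wd m' N) (B (k+1)) - hgt (wd m' N) (B k)
      = (tB B rr m' k : ℤ) - sB B rr m' k := by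
  have h1 := hstep k hk
  have h2 : B (k+1) ≤ N := by
    have := B_mono hstep (k+1) p (by omega) le_rfl
    omega
  rw [hgt_wd_diff hmlt hinv hne (show B k ≤ B (k+1) by omega) h2, h1, tB, sB]

include hB0 hBp hstep hfb hmlt hinv hne hblk in
lemma sB_le {k : ℕ} (hk : k < p) : (sB B rr m' k : ℤ) ≤ hgt (wd m' N) (B k) := by
  have hBkN : B k ≤ N := by
    have := B_mono hstep k p (by omega) le_rfl
    omega
  rw [hgt_wd_span hmlt hinv hne hBkN]
  have hcard : sB B rr m' k
      ≤ ((Finset.range (B k)).filter fun z => z < m' z ∧ B k ≤ m' z).card := by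
    apply Finset.card_le_card_of_injOn (fun x => m' x)
    · intro x hx
      simp only [Finset.mem_coe, Finset.mem_filter, Finset.mem_Ico] at hx
      obtain ⟨⟨hx1, hx2⟩, hx3⟩ := hx
      have hxN : x < N := block_lt_N hBp hstep hk hx1 hx2
      have hout := closer_out hB0 hBp hstep hfb hmlt hblk hk hx1 hx2 hx3
      simp only [Finset.mem_coe, Finset.mem_filter, Finset.mem_range]
      have := hinv x hxN
      refine ⟨by omega, by omega, by omega⟩
    · intro x hx y hy hxy
      simp only [Finset.coe_filter, Set.mem_setOf_eq, Finset.mem_Ico] at hx hy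
      have h1 := hinv x (block_lt_N hBp hstep hk hx.1.1 hx.1.2)
      have h2 := hinv y (block_lt_N hBp hstep hk hy.1.1 hy.1.2)
      simp only at hxy
      rw [hxy] at h1
      omega
  exact_mod_cast hcard

include hB0 hBp hstep hfb hmlt hinv hne hblk in
lemma tB_le {k : ℕ} (hk : k < p) :
    (tB B rr m' k : ℤ) ≤ hgt (wd m' N) (B (k+1)) := by
  have hBkN : B (k+1) ≤ N := by
    have := B_mono hstep (k+1) p (by omega) le_rfl
    omega
  rw [hgt_wd_span hmlt hinv hne hBkN]
  have hcard : tB B rr m' k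
      ≤ ((Finset.range (B (k+1))).filter fun z => z < m' z ∧ B (k+1) ≤ m' z).card := by
    apply Finset.card_le_card
    intro x hx
    simp only [Finset.mem_filter, Finset.mem_Ico] at hx
    obtain ⟨⟨hx1, hx2⟩, hx3⟩ := hx
    have hout := opener_out hB0 hBp hstep hfb hmlt hblk hk hx1 hx2 hx3
    simp only [Finset.mem_filter, Finset.mem_range]
    have := hstep k hk
    refine ⟨by omega, hx3, by omega⟩
  exact_mod_cast hcard

include hB0 hBp hstep hfb hmlt hinv hne hnc hblk in
lemma closer_iff {k x : ℕ} (hk : k < p) (h1 : B k ≤ x) (h2 : x < B k + rr k) :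
    m' x < x ↔ x < B k + sB B rr m' k := by
  have hxN : x < N := block_lt_N hBp hstep hk h1 h2
  -- forbidden configuration: opener a < closer b inside one block
  have forb : ∀ a b, B k ≤ a → a < b → b < B k + rr k → a < m' a → m' b < b → False := by
    intro a b ha hab hb hao hbc
    have haN : a < N := block_lt_N hBp hstep hk ha (by omega)
    have hbN : b < N := block_lt_N hBp hstep hk (by omega) hb
    have hma := opener_out hB0 hBp hstep hfb hmlt hblk hk ha (by omega) hao
    have hmb := closer_out hB0 hBp hstep hfb hmlt hblk hk (by omega) hb hbc
    have hmbN : m' b < N := hmlt b hbN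
    exact hnc (m' b) a hmbN haN (by omega) (by rw [hinv b hbN]; omega)
      (by rw [hinv b hbN]; omega)
  constructor
  · intro hclose
    by_contra hc
    -- all of [B k, x] are closers, so sB ≥ x - B k + 1 > sB
    have hsub : Finset.Icc (B k) x ⊆
        (Finset.Ico (B k) (B k + rr k)).filter fun y => m' y < y := by
      intro y hy
      simp only [Finset.mem_Icc] at hy
      simp only [Finset.mem_filter, Finset.mem_Ico]
      refine ⟨⟨hy.1, by omega⟩, ?_⟩
      rcases Nat.lt_or_ge (m' y) y with hcc | hcc
      · exact hcc
      · exfalso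
        have hyN : y < N := block_lt_N hBp hstep hk hy.1 (by omega)
        have hyy : y < m' y := by have := hne y hyN; omega
        rcases Nat.lt_or_ge y x with hyx | hyx
        · exact forb y x hy.1 hyx (by omega) hyy hclose
        · have : y = x := by omega
          rw [this] at hyy
          omega
    have hcard := Finset.card_le_card hsub
    rw [Nat.card_Icc] at hcard
    have : x + 1 - B k ≤ sB B rr m' k := by rw [sB]; omega
    omega
  · intro hlt
    by_contra hc
    have hopen : x < m' x := by have := hne x hxN; omega
    -- all closers lie strictly below x
    have hsub : ((Finset.Ico (B k) (B k + rr k)).filter fun y => m' y < y)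
        ⊆ Finset.Ico (B k) x := by
      intro y hy
      simp only [Finset.mem_filter, Finset.mem_Ico] at hy
      obtain ⟨⟨hy1, hy2⟩, hy3⟩ := hy
      simp only [Finset.mem_Ico]
      refine ⟨hy1, ?_⟩
      rcases Nat.lt_or_ge y x with hyx | hyx
      · exact hyx
      · exfalso
        rcases Nat.lt_or_ge x y with hxy | hxy
        · exact forb x y h1 hxy hy2 hopen hy3
        · have : y = x := by omega
          rw [this] at hy3
          omega
    have hcard := Finset.card_le_card hsub
    rw [Nat.card_Ico] at hcard
    have : sB B rr m' k ≤ x - B k := by rw [sB] at *; omega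
    omega

end PairingBlocks

/-- extension of a `Fin` pairing to `ℕ`. -/
def mExt (N : ℕ) (m : Fin N → Fin N) : ℕ → ℕ :=
  fun x => if h : x < N then (m ⟨x, h⟩ : ℕ) else x

/-- the `s`-sequence (down-steps per block) extracted from a path. -/
def sOf (rr : ℕ → ℕ) (g : ℕ → ℤ) (p : ℕ) : ℕ → ℕ :=
  fun k => if k < p then (((rr k : ℤ) - (g (k+1) - g k)) / 2).toNat else 0

/-- extension of a path on `Fin (p+1)` to `ℕ`. -/
def gExt (p : ℕ) (γ : Fin (p+1) → ℤ) : ℕ → ℤ :=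
  fun k => if h : k ≤ p then γ ⟨k, by omega⟩ else 0

end NCAux
open NCAux in
/-- For an integer vector `r = (r₁,…,r_p)` of positive integers, the set
`NC₂(r)` of non-crossing pairings of `{1,…,|r|}` pairing no two elements inside
the same block of `1̂_r` is in bijection with the set `Γ(r)` of Dyck `r`-paths,
i.e. functions `γ : {0,…,p} → ℤ` with `γ 0 = γ p = 0`, `γ i + γ (i-1) ≥ rᵢ`
and `γ i - γ (i-1) ∈ Δ(rᵢ) = {t - s : s + t = rᵢ}`.
Pairings are encoded (0-indexed) as fixed-point-free involutions `m` of
`Fin N`, `N = |r|`; `f` is the block function of `1̂_r`. -/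
theorem nc2_equiv_dyck_paths (p : ℕ) (r : Fin p → ℕ) (hr : ∀ i, 1 ≤ r i)
    (N : ℕ) (hN : N = ∑ i, r i) (f : Fin N → Fin p)
    (hf : ∀ (x : Fin N) (k : Fin p), f x = k ↔
      (∑ i ∈ Finset.univ.filter (fun i => i < k), r i) ≤ (x : ℕ) ∧
        (x : ℕ) < ∑ i ∈ Finset.univ.filter (fun i => i ≤ k), r i) :
    Nonempty (
      {m : Fin N → Fin N //
          (∀ x, m (m x) = x) ∧ (∀ x, m x ≠ x) ∧
          (¬ ∃ a b : Fin N, a < b ∧ b < m a ∧ m a < m b) ∧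
          (∀ x, f (m x) ≠ f x)} ≃
      {γ : Fin (p + 1) → ℤ //
          γ 0 = 0 ∧ γ (Fin.last p) = 0 ∧
          ∀ i : Fin p,
            (r i : ℤ) ≤ γ i.succ + γ i.castSucc ∧
            ∃ s t : ℕ, s + t = r i ∧ γ i.succ - γ i.castSucc = (t : ℤ) - (s : ℤ)}) := by
  classical
  set B : ℕ → ℕ := fun n => ∑ i ∈ Finset.univ.filter (fun i : Fin p => (i:ℕ) < n), r i
    with hBdef
  set rr : ℕ → ℕ := fun k => if h : k < p then r ⟨k, h⟩ else 0 with hrrdef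
  set fb : ℕ → ℕ := fun x => if h : x < N then (f ⟨x, h⟩ : ℕ) else 0 with hfbdef
  have hrrk : ∀ k : Fin p, rr (k : ℕ) = r k := by
    intro k
    simp only [hrrdef, dif_pos k.isLt, Fin.eta]
  have hB0 : B 0 = 0 := by simp [hBdef]
  have hstep : ∀ k, k < p → B (k+1) = B k + rr k := by
    intro k hk
    have hins : (Finset.univ.filter (fun i : Fin p => (i:ℕ) < k+1))
        = insert ⟨k, hk⟩ (Finset.univ.filter (fun i : Fin p => (i:ℕ) < k)) := by
      ext i
      simp only [Finset.mem_filter, Finset.mem_insert, Finset.mem_univ, true_and]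
      constructor
      · intro h
        rcases Nat.lt_or_ge (i:ℕ) k with hc | hc
        · exact Or.inr hc
        · exact Or.inl (Fin.ext (by simp; omega))
      · rintro (h | h)
        · rw [h]; simp
        · omega
    simp only [hBdef, hrrdef]
    rw [hins, Finset.sum_insert (by simp), dif_pos hk]
    omega
  have hBp : B p = N := by
    simp only [hBdef]
    rw [Finset.filter_true_of_mem (fun i _ => i.isLt), hN]
  have hBk : ∀ k : Fin p, B (k:ℕ) = ∑ i ∈ Finset.univ.filter (fun i => i < k), r i := by
    intro k
    simp only [hBdef]
    apply Finset.sum_congr _ (fun _ _ => rfl)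
    ext i
    simp only [Finset.mem_filter, Finset.mem_univ, true_and, Fin.lt_def]
  have hBk1 : ∀ k : Fin p, B ((k:ℕ)+1) = ∑ i ∈ Finset.univ.filter (fun i => i ≤ k), r i := by
    intro k
    simp only [hBdef]
    apply Finset.sum_congr _ (fun _ _ => rfl)
    ext i
    simp only [Finset.mem_filter, Finset.mem_univ, true_and, Fin.le_def]
    omega
  have ffb : ∀ x : Fin N, fb (x : ℕ) = (f x : ℕ) := by
    intro x
    simp only [hfbdef, dif_pos x.isLt, Fin.eta]
  have hfb : ∀ x, x < N → fb x < p ∧ B (fb x) ≤ x ∧ x < B (fb x + 1) := by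
    intro x hx
    have hfx := (hf ⟨x, hx⟩ (f ⟨x, hx⟩)).mp rfl
    have he : fb x = (f ⟨x, hx⟩ : ℕ) := dif_pos hx
    rw [he]
    refine ⟨(f ⟨x, hx⟩).isLt, ?_, ?_⟩
    · rw [hBk]; exact hfx.1
    · rw [hBk1]; exact hfx.2
  -- properties of the extension of a valid pairing
  have hprops : ∀ m : Fin N → Fin N,
      (∀ x, m (m x) = x) → (∀ x, m x ≠ x) →
      (¬ ∃ a b : Fin N, a < b ∧ b < m a ∧ m a < m b) →
      (∀ x, f (m x) ≠ f x) →
      (∀ x, x < N → mExt N m x < N) ∧ (∀ x, x < N → mExt N m (mExt N m x) = x)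
      ∧ (∀ x, x < N → mExt N m x ≠ x)
      ∧ (∀ a b, a < N → b < N → a < b → b < mExt N m a → mExt N m a < mExt N m b → False)
      ∧ (∀ x, x < N → fb (mExt N m x) ≠ fb x) := by
    intro m h1 h2 h3 h4
    have he : ∀ x (hx : x < N), mExt N m x = (m ⟨x, hx⟩ : ℕ) := fun x hx => dif_pos hx
    refine ⟨?_, ?_, ?_, ?_, ?_⟩
    · intro x hx
      rw [he x hx]
      exact (m ⟨x, hx⟩).isLt
    · intro x hx
      rw [he x hx, he _ (m ⟨x, hx⟩).isLt, Fin.eta]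
      rw [h1 ⟨x, hx⟩]
    · intro x hx heq
      rw [he x hx] at heq
      exact h2 ⟨x, hx⟩ (Fin.ext heq)
    · intro a b ha hb l1 l2 l3
      rw [he a ha, he b hb] at *
      exact h3 ⟨⟨a, ha⟩, ⟨b, hb⟩, by rwa [Fin.mk_lt_mk],
        by rw [Fin.lt_def]; exact l2, by rw [Fin.lt_def]; exact l3⟩
    · intro x hx heq
      rw [he x hx, ffb (m ⟨x, hx⟩), ffb ⟨x, hx⟩] at heq
      exact h4 ⟨x, hx⟩ (Fin.ext heq)
  -- the path associated to a pairing satisfies the Dyck conditions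
  have hFok : ∀ m : Fin N → Fin N,
      (∀ x, m (m x) = x) → (∀ x, m x ≠ x) →
      (¬ ∃ a b : Fin N, a < b ∧ b < m a ∧ m a < m b) →
      (∀ x, f (m x) ≠ f x) →
      hgt (wd (mExt N m) N) (B 0) = 0 ∧ hgt (wd (mExt N m) N) (B p) = 0 ∧
      ∀ k : Fin p,
        ((r k : ℤ) ≤ hgt (wd (mExt N m) N) (B ((k:ℕ)+1))
            + hgt (wd (mExt N m) N) (B (k:ℕ))) ∧
        ∃ s t : ℕ, s + t = r k ∧
          hgt (wd (mExt N m) N) (B ((k:ℕ)+1)) - hgt (wd (mExt N m) N) (B (k:ℕ))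
            = (t : ℤ) - (s : ℤ) := by
    intro m h1 h2 h3 h4
    obtain ⟨hmlt', hinv', hne', hnc', hblk'⟩ := hprops m h1 h2 h3 h4
    refine ⟨by rw [hB0]; rfl, by rw [hBp]; exact hgt_wd_N hmlt' hinv' hne', ?_⟩
    intro k
    have hk := k.isLt
    have hsum := sB_add_tB hBp hstep hne' hk
    have hdiff := hgt_wd_diff_block hBp hstep hmlt' hinv' hne' (k := (k:ℕ)) hk
    have hsle := sB_le hB0 hBp hstep hfb hmlt' hinv' hne' hblk' hk
    have htle := tB_le hB0 hBp hstep hfb hmlt' hinv' hne' hblk' hk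
    rw [hrrk k] at hsum
    refine ⟨by omega, sB B rr (mExt N m) (k:ℕ), tB B rr (mExt N m) (k:ℕ), hsum, by omega⟩
  -- facts about the data extracted from a Dyck path
  have hGfacts : ∀ γ : Fin (p+1) → ℤ, γ 0 = 0 → γ (Fin.last p) = 0 →
      (∀ i : Fin p, (r i : ℤ) ≤ γ i.succ + γ i.castSucc ∧
        ∃ s t : ℕ, s + t = r i ∧ γ i.succ - γ i.castSucc = (t:ℤ) - (s:ℤ)) →
      (∀ k, k < p → sOf rr (gExt p γ) p k ≤ rr k) ∧ gExt p γ 0 = 0 ∧ gExt p γ p = 0 ∧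
      (∀ k, k < p → gExt p γ (k+1) - gExt p γ k = (rr k:ℤ) - 2 * sOf rr (gExt p γ) p k) ∧
      (∀ k, k < p → (sOf rr (gExt p γ) p k : ℤ) ≤ gExt p γ k) ∧
      (∀ k, k < p → ((rr k:ℤ) - sOf rr (gExt p γ) p k) ≤ gExt p γ (k+1)) := by
    intro γ hg0' hgp' hcond
    have hgk : ∀ k, (hk : k ≤ p) → gExt p γ k = γ ⟨k, by omega⟩ := fun k hk => dif_pos hk
    have key : ∀ k, k < p → ∃ sk tk : ℕ, sOf rr (gExt p γ) p k = sk ∧ sk + tk = rr k ∧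
        gExt p γ (k+1) - gExt p γ k = (tk:ℤ) - (sk:ℤ) ∧
        (sk:ℤ) ≤ gExt p γ k ∧ (tk:ℤ) ≤ gExt p γ (k+1) := by
      intro k hk
      obtain ⟨hineq, sk, tk, hsum, hdiff⟩ := hcond ⟨k, hk⟩
      have e1 : γ (⟨k, hk⟩ : Fin p).succ = gExt p γ (k+1) := by
        rw [hgk (k+1) (by omega)]
        congr 1
      have e2 : γ (⟨k, hk⟩ : Fin p).castSucc = gExt p γ k := by
        rw [hgk k (by omega)]
        congr 1
      rw [e1, e2] at hineq hdiff
      have hrk : rr k = r ⟨k, hk⟩ := by rw [hrrdef]; exact dif_pos hk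
      have h2s : ((rr k:ℤ) - (gExt p γ (k+1) - gExt p γ k)) = 2 * (sk:ℤ) := by
        rw [hrk, hdiff]
        push_cast [← hsum]
        ring
      have hsval : sOf rr (gExt p γ) p k = sk := by
        simp only [sOf, if_pos hk, h2s]
        rw [Int.mul_ediv_cancel_left _ (by norm_num)]
        simp
      refine ⟨sk, tk, hsval, by omega, hdiff, by omega, by omega⟩
    refine ⟨?_, ?_, ?_, ?_, ?_, ?_⟩
    · intro k hk
      obtain ⟨sk, tk, e1, e2, _, _, _⟩ := key k hk
      omega
    · rw [hgk 0 (by omega)]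
      rw [show (⟨0, by omega⟩ : Fin (p+1)) = 0 from rfl]
      exact hg0'
    · rw [hgk p le_rfl]
      rw [show (⟨p, by omega⟩ : Fin (p+1)) = Fin.last p from rfl]
      exact hgp'
    · intro k hk
      obtain ⟨sk, tk, e1, e2, e3, _, _⟩ := key k hk
      rw [e1, e3]
      push_cast [← e2]
      ring
    · intro k hk
      obtain ⟨sk, tk, e1, e2, e3, e4, e5⟩ := key k hk
      rw [e1]; exact e4
    · intro k hk
      obtain ⟨sk, tk, e1, e2, e3, e4, e5⟩ := key k hk
      rw [e1]
      have : ((rr k : ℤ)) = (sk:ℤ) + tk := by push_cast [← e2]; ring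
      omega
  refine ⟨{
    toFun := fun mm => ⟨fun k => hgt (wd (mExt N mm.1) N) (B (k:ℕ)), by
      obtain ⟨m, h1, h2, h3, h4⟩ := mm
      obtain ⟨c1, c2, c3⟩ := hFok m h1 h2 h3 h4
      refine ⟨by simpa using c1, by simpa using c2, fun i => ?_⟩
      obtain ⟨d1, d2⟩ := c3 i
      constructor
      · simpa [Fin.val_succ, Fin.coe_castSucc] using d1
      · simpa [Fin.val_succ, Fin.coe_castSucc] using d2⟩,
    invFun := fun gg =>
      ⟨fun x => ⟨mtch (wg B fb (sOf rr (gExt p gg.1) p) N) (x:ℕ) % N,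
          Nat.mod_lt _ x.pos⟩, by
        obtain ⟨γ, hg0', hgp', hcond⟩ := gg
        obtain ⟨hsr', hg0'', hgp'', hgd', hsg', htg'⟩ := hGfacts γ hg0' hgp' hcond
        have hN0 : hgt (wg B fb (sOf rr (gExt p γ) p) N) N = 0 :=
          hgt_wg_N hB0 hBp hstep hfb hsr' hg0'' hgp'' hgd'
        have hnn : ∀ y, y ≤ N → 0 ≤ hgt (wg B fb (sOf rr (gExt p γ) p) N) y :=
          hgt_wg_nonneg hB0 hBp hstep hfb hsr' hg0'' hgp'' hgd' hsg'
        have hmod : ∀ y, y < N →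
            mtch (wg B fb (sOf rr (gExt p γ) p) N) y % N
              = mtch (wg B fb (sOf rr (gExt p γ) p) N) y :=
          fun y hy => Nat.mod_eq_of_lt (mtch_lt hN0 hnn hy)
        refine ⟨?_, ?_, ?_, ?_⟩
        · intro x
          apply Fin.ext
          show mtch _ (mtch _ (x:ℕ) % N) % N = (x:ℕ)
          rw [hmod _ x.isLt, hmod _ (mtch_lt hN0 hnn x.isLt),
            mtch_invol hN0 hnn x.isLt]
        · intro x heq
          have := congrArg Fin.val heq
          simp only at this
          rw [hmod _ x.isLt] at this
          exact mtch_ne hN0 hnn x.isLt this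
        · rintro ⟨a, b, l1, l2, l3⟩
          rw [Fin.lt_def] at l1 l2 l3
          simp only at l2 l3
          rw [hmod _ a.isLt] at l2 l3
          rw [hmod _ b.isLt] at l3
          exact mtch_noncross hN0 hnn a.isLt b.isLt l1 l2 l3
        · intro x heq
          have hblockne := mtch_wg_block_ne hB0 hBp hstep hfb hsr' hg0''
            hgp'' hgd' hsg' x.isLt
          have e1 := ffb (⟨mtch (wg B fb (sOf rr (gExt p γ) p) N) (x:ℕ) % N,
            Nat.mod_lt _ x.pos⟩ : Fin N)
          have e2 := ffb x
          apply hblockne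
          rw [← hmod _ x.isLt]
          show fb (mtch (wg B fb (sOf rr (gExt p γ) p) N) (x:ℕ) % N) = fb (x:ℕ)
          rw [e1, e2, heq]⟩,
    left_inv := ?_,
    right_inv := ?_ }⟩
  · -- left inverse
    rintro ⟨m, h1, h2, h3, h4⟩
    obtain ⟨hmlt', hinv', hne', hnc', hblk'⟩ := hprops m h1 h2 h3 h4
    apply Subtype.ext
    funext x
    apply Fin.ext
    show mtch (wg B fb
        (sOf rr (gExt p (fun k => hgt (wd (mExt N m) N) (B (k:ℕ)))) p) N) (x:ℕ) % N
      = ((m x : ℕ))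
    set γF : Fin (p+1) → ℤ := fun k => hgt (wd (mExt N m) N) (B (k:ℕ)) with hγF
    have hweq : wg B fb (sOf rr (gExt p γF) p) N = wd (mExt N m) N := by
      funext z
      rcases Nat.lt_or_ge z N with hz | hz
      · obtain ⟨hkp, hbz1, hbz2⟩ := hfb z hz
        have hstepk := hstep (fb z) hkp
        have hsOf : sOf rr (gExt p γF) p (fb z) = sB B rr (mExt N m) (fb z) := by
          have e1 : gExt p γF (fb z + 1) = hgt (wd (mExt N m) N) (B (fb z + 1)) := by
            rw [show gExt p γF (fb z + 1) = γF ⟨fb z + 1, by omega⟩ from dif_pos (by omega)]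
          have e2 : gExt p γF (fb z) = hgt (wd (mExt N m) N) (B (fb z)) := by
            rw [show gExt p γF (fb z) = γF ⟨fb z, by omega⟩ from dif_pos (by omega)]
          have hdiff := hgt_wd_diff_block hBp hstep hmlt' hinv' hne' hkp
          have hsum := sB_add_tB hBp hstep hne' hkp
          simp only [sOf, if_pos hkp, e1, e2, hdiff]
          have h2s : (rr (fb z) : ℤ)
              - ((tB B rr (mExt N m) (fb z) : ℤ) - (sB B rr (mExt N m) (fb z) : ℤ))
              = 2 * (sB B rr (mExt N m) (fb z) : ℤ) := by
            omega
          rw [h2s, Int.mul_ediv_cancel_left _ (by norm_num)]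
          simp
        have hci := closer_iff hB0 hBp hstep hfb hmlt' hinv' hne' hnc' hblk'
          hkp hbz1 (by omega)
        have hnez := hne' z hz
        have hiff : z < mExt N m z
            ↔ B (fb z) + sB B rr (mExt N m) (fb z) ≤ z := by
          rcases Nat.lt_or_ge (mExt N m z) z with hc | hc
          · have hh := hci.mp hc
            constructor <;> intro <;> omega
          · have h2 : ¬ z < B (fb z) + sB B rr (mExt N m) (fb z) :=
              fun hh => absurd (hci.mpr hh) (by omega)
            constructor <;> intro <;> omega
        show decide (z < N ∧ B (fb z) + sOf rr (gExt p γF) p (fb z) ≤ z) = _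
        rw [hsOf]
        show _ = decide (z < N ∧ z < mExt N m z)
        apply decide_eq_decide.mpr
        constructor
        · rintro ⟨-, hle⟩
          exact ⟨hz, hiff.mpr hle⟩
        · rintro ⟨-, hlt⟩
          exact ⟨hz, hiff.mp hlt⟩
      · rw [wg_false_of_ge hz, wd_eq_false_of_ge hz]
    rw [hweq, mtch_wd_eq hmlt' hinv' hne' hnc' x.isLt]
    show (if h : (x:ℕ) < N then ((m ⟨(x:ℕ), h⟩ : Fin N) : ℕ) else (x:ℕ)) % N = _
    rw [dif_pos x.isLt, Fin.eta]
    exact Nat.mod_eq_of_lt (m x).isLt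
  · -- right inverse
    rintro ⟨γ, hg0', hgp', hcond⟩
    obtain ⟨hsr', hg0'', hgp'', hgd', hsg', htg'⟩ := hGfacts γ hg0' hgp' hcond
    have hN0 : hgt (wg B fb (sOf rr (gExt p γ) p) N) N = 0 :=
      hgt_wg_N hB0 hBp hstep hfb hsr' hg0'' hgp'' hgd'
    have hnn : ∀ y, y ≤ N → 0 ≤ hgt (wg B fb (sOf rr (gExt p γ) p) N) y :=
      hgt_wg_nonneg hB0 hBp hstep hfb hsr' hg0'' hgp'' hgd' hsg'
    have hmod : ∀ y, y < N →
        mtch (wg B fb (sOf rr (gExt p γ) p) N) y % N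
          = mtch (wg B fb (sOf rr (gExt p γ) p) N) y :=
      fun y hy => Nat.mod_eq_of_lt (mtch_lt hN0 hnn hy)
    apply Subtype.ext
    funext k
    show hgt (wd (mExt N (fun x : Fin N =>
        (⟨mtch (wg B fb (sOf rr (gExt p γ) p) N) (x:ℕ) % N,
          Nat.mod_lt _ x.pos⟩ : Fin N))) N) (B (k:ℕ)) = γ k
    have hweq : wd (mExt N (fun x : Fin N =>
        (⟨mtch (wg B fb (sOf rr (gExt p γ) p) N) (x:ℕ) % N,
          Nat.mod_lt _ x.pos⟩ : Fin N))) N = wg B fb (sOf rr (gExt p γ) p) N := by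
      funext z
      rcases Nat.lt_or_ge z N with hz | hz
      · have hme : mExt N (fun x : Fin N =>
            (⟨mtch (wg B fb (sOf rr (gExt p γ) p) N) (x:ℕ) % N,
              Nat.mod_lt _ x.pos⟩ : Fin N)) z
            = mtch (wg B fb (sOf rr (gExt p γ) p) N) z := by
          show (if h : z < N then _ else z) = _
          rw [dif_pos hz]
          exact hmod z hz
        rcases hwz : wg B fb (sOf rr (gExt p γ) p) N z with hv | hv
        · show decide _ = false
          simp only [decide_eq_false_iff_not, not_and]
          intro _
          rw [hme]
          rw [mtch_gt_iff hN0 hnn hz, hwz]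
          simp
        · show decide _ = true
          simp only [decide_eq_true_eq]
          refine ⟨hz, ?_⟩
          rw [hme]
          exact (mtch_gt_iff hN0 hnn hz).mpr hwz
      · rw [wd_eq_false_of_ge hz, wg_false_of_ge hz]
    rw [hweq]
    have hkp : (k : ℕ) ≤ p := by omega
    rw [hgt_wg_B hB0 hBp hstep hfb hsr' hg0'' hgd' (k:ℕ) hkp]
    rw [show gExt p γ (k:ℕ) = γ ⟨(k:ℕ), by omega⟩ from dif_pos hkp, Fin.eta]
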